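/- Let S = ⟨d₀,d₁,d₂,d₃⟩ and for i=1,2,3 let a_{ii} be the smallest positive integer such that a_{ii}d_i is a nonnegative integer combination of the other three generators. If λ_i, λ_i' ∈ ℕ with λ_i, λ_i' < a_{ii} for i = 1,2,3 and λ₁d₁ + λ₂d₂ + λ₃d₃ = λ₁'d₁ + λ₂'d₂ + λ₃'d₃, then (λ₁,λ₂,λ₃) = (λ₁',λ₂',λ₃'). -/
import Mathlib


theorem unique_bounded_representation (d₀ d₁ d₂ d₃ : ℕ)
    (h0 : 0 < d₀) (h1 : 0 < d₁) (h2 : 0 < d₂) (h3 : 0 < d₃)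
    (a₁ a₂ a₃ : ℕ)
    (ha1 : 0 < a₁) (ha1mem : a₁ * d₁ ∈ AddSubmonoid.closure ({d₀, d₂, d₃} : Set ℕ))
    (ha1min : ∀ m : ℕ, 0 < m → m * d₁ ∈ AddSubmonoid.closure ({d₀, d₂, d₃} : Set ℕ) → a₁ ≤ m)
    (ha2 : 0 < a₂) (ha2mem : a₂ * d₂ ∈ AddSubmonoid.closure ({d₀, d₁, d₃} : Set ℕ))
    (ha2min : ∀ m : ℕ, 0 < m → m * d₂ ∈ AddSubmonoid.closure ({d₀, d₁, d₃} : Set ℕ) → a₂ ≤ m)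
    (ha3 : 0 < a₃) (ha3mem : a₃ * d₃ ∈ AddSubmonoid.closure ({d₀, d₁, d₂} : Set ℕ))
    (ha3min : ∀ m : ℕ, 0 < m → m * d₃ ∈ AddSubmonoid.closure ({d₀, d₁, d₂} : Set ℕ) → a₃ ≤ m)
    (l₁ l₂ l₃ l₁' l₂' l₃' : ℕ)
    (hb1 : l₁ < a₁) (hb2 : l₂ < a₂) (hb3 : l₃ < a₃)
    (hb1' : l₁' < a₁) (hb2' : l₂' < a₂) (hb3' : l₃' < a₃)
    (heq : l₁ * d₁ + l₂ * d₂ + l₃ * d₃ = l₁' * d₁ + l₂' * d₂ + l₃' * d₃) :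
    l₁ = l₁' ∧ l₂ = l₂' ∧ l₃ = l₃' := by
  have mem2 : ∀ (s : Set ℕ) (x y : ℕ), x ∈ s → y ∈ s → ∀ c b : ℕ,
      c * x + b * y ∈ AddSubmonoid.closure s := by
    intro s x y hx hy c b
    exact add_mem
      (by simpa [smul_eq_mul] using
        nsmul_mem (AddSubmonoid.subset_closure hx) c)
      (by simpa [smul_eq_mul] using
        nsmul_mem (AddSubmonoid.subset_closure hy) b)
  have K1 : ∀ c₁ c₂ c₃ : ℕ, 0 < c₁ → c₁ < a₁ → c₁ * d₁ = c₂ * d₂ + c₃ * d₃ → False := by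
    intro c₁ c₂ c₃ hpos hlt he
    have := ha1min c₁ hpos (he ▸ mem2 _ d₂ d₃ (by simp) (by simp) c₂ c₃)
    omega
  have K2 : ∀ c₁ c₂ c₃ : ℕ, 0 < c₂ → c₂ < a₂ → c₂ * d₂ = c₁ * d₁ + c₃ * d₃ → False := by
    intro c₁ c₂ c₃ hpos hlt he
    have := ha2min c₂ hpos (he ▸ mem2 _ d₁ d₃ (by simp) (by simp) c₁ c₃)
    omega
  have K3 : ∀ c₁ c₂ c₃ : ℕ, 0 < c₃ → c₃ < a₃ → c₃ * d₃ = c₁ * d₁ + c₂ * d₂ → False := by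
    intro c₁ c₂ c₃ hpos hlt he
    have := ha3min c₃ hpos (he ▸ mem2 _ d₁ d₂ (by simp) (by simp) c₁ c₂)
    omega
  have heqz : (l₁ * d₁ + l₂ * d₂ + l₃ * d₃ : ℤ) = l₁' * d₁ + l₂' * d₂ + l₃' * d₃ := by
    exact_mod_cast heq
  rcases le_total l₁' l₁ with p1 | p1 <;> rcases le_total l₂' l₂ with p2 | p2 <;>
    rcases le_total l₃' l₃ with p3 | p3
  · have e : (l₁ - l₁') * d₁ + (l₂ - l₂') * d₂ + (l₃ - l₃') * d₃ = 0 := by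
      zify [p1, p2, p3]; linear_combination heqz
    simp only [Nat.add_eq_zero, Nat.mul_eq_zero] at e
    omega
  · have e : (l₃' - l₃) * d₃ = (l₁ - l₁') * d₁ + (l₂ - l₂') * d₂ := by
      zify [p1, p2, p3]; linear_combination -heqz
    rcases Nat.eq_zero_or_pos (l₃' - l₃) with h | h
    · rw [h, zero_mul] at e; have e2 := e.symm; simp only [Nat.add_eq_zero, Nat.mul_eq_zero] at e2; omega
    · exact absurd e (fun e => K3 _ _ _ h (by omega) e)
  · have e : (l₂' - l₂) * d₂ = (l₁ - l₁') * d₁ + (l₃ - l₃') * d₃ := by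
      zify [p1, p2, p3]; linear_combination -heqz
    rcases Nat.eq_zero_or_pos (l₂' - l₂) with h | h
    · rw [h, zero_mul] at e; have e2 := e.symm; simp only [Nat.add_eq_zero, Nat.mul_eq_zero] at e2; omega
    · exact absurd e (fun e => K2 _ _ _ h (by omega) e)
  · have e : (l₁ - l₁') * d₁ = (l₂' - l₂) * d₂ + (l₃' - l₃) * d₃ := by
      zify [p1, p2, p3]; linear_combination heqz
    rcases Nat.eq_zero_or_pos (l₁ - l₁') with h | h
    · rw [h, zero_mul] at e; have e2 := e.symm; simp only [Nat.add_eq_zero, Nat.mul_eq_zero] at e2; omega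
    · exact absurd e (fun e => K1 _ _ _ h (by omega) e)
  · have e : (l₁' - l₁) * d₁ = (l₂ - l₂') * d₂ + (l₃ - l₃') * d₃ := by
      zify [p1, p2, p3]; linear_combination -heqz
    rcases Nat.eq_zero_or_pos (l₁' - l₁) with h | h
    · rw [h, zero_mul] at e; have e2 := e.symm; simp only [Nat.add_eq_zero, Nat.mul_eq_zero] at e2; omega
    · exact absurd e (fun e => K1 _ _ _ h (by omega) e)
  · have e : (l₂ - l₂') * d₂ = (l₁' - l₁) * d₁ + (l₃' - l₃) * d₃ := by
      zify [p1, p2, p3]; linear_combination heqz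
    rcases Nat.eq_zero_or_pos (l₂ - l₂') with h | h
    · rw [h, zero_mul] at e; have e2 := e.symm; simp only [Nat.add_eq_zero, Nat.mul_eq_zero] at e2; omega
    · exact absurd e (fun e => K2 _ _ _ h (by omega) e)
  · have e : (l₃ - l₃') * d₃ = (l₁' - l₁) * d₁ + (l₂' - l₂) * d₂ := by
      zify [p1, p2, p3]; linear_combination heqz
    rcases Nat.eq_zero_or_pos (l₃ - l₃') with h | h
    · rw [h, zero_mul] at e; have e2 := e.symm; simp only [Nat.add_eq_zero, Nat.mul_eq_zero] at e2; omega
    · exact absurd e (fun e => K3 _ _ _ h (by omega) e)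
  · have e : (l₁' - l₁) * d₁ + (l₂' - l₂) * d₂ + (l₃' - l₃) * d₃ = 0 := by
      zify [p1, p2, p3]; linear_combination -heqz
    simp only [Nat.add_eq_zero, Nat.mul_eq_zero] at e
    omega
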